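/- Let B ≥ 2 be an integer, let I = {1, …, B}, let ν be a measure on I with ν({i}) > 0 for every i ∈ I, and let g : I → ℝ be non-constant. Then there exists a knot t ∈ {1, …, B−1} of g, i.e. an index with g(t) ≠ g(t+1), such that the decision stump ψ_t : I → ℝ defined by ψ_t(x) := ( ν({x' ∈ I : x' > t})·1{x ≤ t} − ν({x' ∈ I : x' ≤ t})·1{x > t} ) / √( ν({x' ∈ I : x' ≤ t})·ν({x' ∈ I : x' > t}) ) satisfies (∫_I ψ_t·g dν)² > 0. -/
import Mathlib

/-- The decision stump on `I = {1,…,B}` at threshold `t`, with respect to weights `ν`. -/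
noncomputable def decisionStump (B t : ℕ) (ν : ℕ → ℝ) (x : ℕ) : ℝ :=
  ((∑ i ∈ Finset.Icc (t + 1) B, ν i) * (if x ≤ t then 1 else 0) -
      (∑ i ∈ Finset.Icc 1 t, ν i) * (if x ≤ t then 0 else 1)) /
    Real.sqrt ((∑ i ∈ Finset.Icc 1 t, ν i) * (∑ i ∈ Finset.Icc (t + 1) B, ν i))

private lemma icc_split (B t : ℕ) (f : ℕ → ℝ) (ht : t ≤ B) :
    ∑ i ∈ Finset.Icc 1 B, f i =
      ∑ i ∈ Finset.Icc 1 t, f i + ∑ i ∈ Finset.Icc (t + 1) B, f i := by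
  rw [show Finset.Icc 1 B = Finset.Ioc 0 B from Finset.Icc_add_one_left_eq_Ioc 0 B,
      show Finset.Icc 1 t = Finset.Ioc 0 t from Finset.Icc_add_one_left_eq_Ioc 0 t,
      show Finset.Icc (t + 1) B = Finset.Ioc t B from Finset.Icc_add_one_left_eq_Ioc t B]
  exact (Finset.sum_Ioc_consecutive f (Nat.zero_le t) ht).symm

private lemma stump_sum (B t : ℕ) (ν g : ℕ → ℝ) :
    ∑ x ∈ Finset.Icc 1 B, decisionStump B t ν x * g x * ν x =
      ((∑ i ∈ Finset.Icc (t + 1) B, ν i) * (∑ i ∈ Finset.Icc 1 t, g i * ν i) -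
        (∑ i ∈ Finset.Icc 1 t, ν i) * (∑ i ∈ Finset.Icc (t + 1) B, g i * ν i)) /
        Real.sqrt ((∑ i ∈ Finset.Icc 1 t, ν i) * (∑ i ∈ Finset.Icc (t + 1) B, ν i)) := by
  by_cases ht : t ≤ B
  · set L := ∑ i ∈ Finset.Icc 1 t, ν i
    set R := ∑ i ∈ Finset.Icc (t + 1) B, ν i
    rw [icc_split B t (fun x => decisionStump B t ν x * g x * ν x) ht]
    have h1 : ∑ x ∈ Finset.Icc 1 t, decisionStump B t ν x * g x * ν x =
        (R / Real.sqrt (L * R)) * ∑ i ∈ Finset.Icc 1 t, g i * ν i := by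
      rw [Finset.mul_sum]
      refine Finset.sum_congr rfl fun x hx => ?_
      have hxt : x ≤ t := (Finset.mem_Icc.mp hx).2
      simp only [decisionStump, if_pos hxt]
      ring
    have h2 : ∑ x ∈ Finset.Icc (t + 1) B, decisionStump B t ν x * g x * ν x =
        (-L / Real.sqrt (L * R)) * ∑ i ∈ Finset.Icc (t + 1) B, g i * ν i := by
      rw [Finset.mul_sum]
      refine Finset.sum_congr rfl fun x hx => ?_
      have hxt : ¬ x ≤ t := by
        have := (Finset.mem_Icc.mp hx).1; omega
      simp only [decisionStump, if_neg hxt]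
      ring
    rw [h1, h2]; ring
  · -- t > B : both sides equal; Icc (t+1) B is empty, handle directly
    have hBt : B < t + 1 := by omega
    have hempty : Finset.Icc (t + 1) B = ∅ := Finset.Icc_eq_empty_of_lt hBt
    have hsum : ∀ x ∈ Finset.Icc 1 B, decisionStump B t ν x * g x * ν x = 0 := by
      intro x hx
      have hxt : x ≤ t := by have := (Finset.mem_Icc.mp hx).2; omega
      simp [decisionStump, hempty, if_pos hxt]
    rw [Finset.sum_eq_zero hsum]
    simp [hempty]

theorem exists_informative_split
    (B : ℕ) (hB : 2 ≤ B) (ν : ℕ → ℝ)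
    (hν : ∀ i ∈ Finset.Icc 1 B, 0 < ν i)
    (g : ℕ → ℝ)
    (hg : ∃ i ∈ Finset.Icc 1 B, ∃ j ∈ Finset.Icc 1 B, g i ≠ g j) :
    ∃ t ∈ Finset.Icc 1 (B - 1),
      g t ≠ g (t + 1) ∧
        0 < (∑ x ∈ Finset.Icc 1 B, decisionStump B t ν x * g x * ν x) ^ 2 := by
  set W : ℝ := ∑ i ∈ Finset.Icc 1 B, ν i with hWdef
  set G : ℝ := ∑ i ∈ Finset.Icc 1 B, g i * ν i with hGdef
  set S : ℕ → ℝ := fun u =>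
    W * (∑ i ∈ Finset.Icc 1 u, g i * ν i) - G * (∑ i ∈ Finset.Icc 1 u, ν i) with hSdef
  have hW : 0 < W := by
    apply Finset.sum_pos hν
    exact ⟨1, Finset.mem_Icc.mpr ⟨le_refl 1, by omega⟩⟩
  have hS0 : S 0 = 0 := by simp [hSdef]
  have hSB : S B = 0 := by simp only [hSdef, ← hWdef, ← hGdef]; ring
  have hstep : ∀ k : ℕ, S (k + 1) - S k = (W * g (k + 1) - G) * ν (k + 1) := by
    intro k
    simp only [hSdef, Finset.sum_Icc_succ_top (by omega : 1 ≤ k + 1)]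
    ring
  -- there is a point in Icc 1 B where W * g i ≠ G
  have hexist : ∃ i ∈ Finset.Icc 1 B, W * g i ≠ G := by
    by_contra h
    push_neg at h
    obtain ⟨i, hi, j, hj, hij⟩ := hg
    have : W * g i = W * g j := (h i hi).trans (h j hj).symm
    exact hij (mul_left_cancel₀ (ne_of_gt hW) this)
  -- hence S is nonzero somewhere on Icc 1 (B-1)
  have hSne : ∃ u ∈ Finset.Icc 1 (B - 1), S u ≠ 0 := by
    obtain ⟨i, hi, hne⟩ := hexist
    obtain ⟨hi1, hiB⟩ := Finset.mem_Icc.mp hi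
    have hνi : 0 < ν i := hν i hi
    have hdiff : S i - S (i - 1) ≠ 0 := by
      have := hstep (i - 1)
      rw [show i - 1 + 1 = i from by omega] at this
      rw [this]
      exact mul_ne_zero (sub_ne_zero.mpr hne) (ne_of_gt hνi)
    by_cases hSi : S i = 0
    · refine ⟨i - 1, Finset.mem_Icc.mpr ⟨?_, by omega⟩, ?_⟩
      · rcases Nat.eq_or_lt_of_le hi1 with h1 | h1
        · exfalso; rw [hSi, ← h1, hS0] at hdiff; simp at hdiff
        · omega
      · intro h; rw [hSi, h] at hdiff; simp at hdiff
    · refine ⟨i, Finset.mem_Icc.mpr ⟨hi1, ?_⟩, hSi⟩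
      rcases Nat.eq_or_lt_of_le hiB with h1 | h1
      · exfalso; rw [h1, hSB] at hSi; exact hSi rfl
      · omega
  obtain ⟨u0, hu0mem, hu0⟩ := hSne
  -- maximize |S| on Icc 1 (B-1), then take the largest maximizer
  obtain ⟨tm, htm, hmax⟩ :=
    Finset.exists_max_image (Finset.Icc 1 (B - 1)) (fun u => |S u|) ⟨u0, hu0mem⟩
  haveI : DecidablePred (fun u : ℕ => ∀ v ∈ Finset.Icc 1 (B - 1), |S v| ≤ |S u|) :=
    fun u => Finset.decidableDforallFinset
  set T : Finset ℕ :=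
    (Finset.Icc 1 (B - 1)).filter (fun u : ℕ => ∀ v ∈ Finset.Icc 1 (B - 1), |S v| ≤ |S u|) with hTdef
  have hTne : T.Nonempty := ⟨tm, Finset.mem_filter.mpr ⟨htm, hmax⟩⟩
  obtain ⟨t, htT, htLargest⟩ : ∃ t ∈ T, ∀ u ∈ T, u ≤ t :=
    ⟨T.max' hTne, Finset.max'_mem T hTne, fun u hu => Finset.le_max' T u hu⟩
  obtain ⟨htmem, htmax⟩ := Finset.mem_filter.mp htT
  obtain ⟨ht1, htB1⟩ := Finset.mem_Icc.mp htmem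
  have htB : t < B := by omega
  -- |S t| is positive
  have hMpos : 0 < |S t| := lt_of_lt_of_le (abs_pos.mpr hu0) (htmax u0 hu0mem)
  have hSt : S t ≠ 0 := abs_pos.mp hMpos
  -- |S (t+1)| < |S t|
  have hnext : |S (t + 1)| < |S t| := by
    by_cases h : t + 1 ≤ B - 1
    · have hmem' : t + 1 ∈ Finset.Icc 1 (B - 1) := Finset.mem_Icc.mpr ⟨by omega, h⟩
      rcases lt_or_eq_of_le (htmax (t + 1) hmem') with h' | h'
      · exact h'
      · exfalso
        have : t + 1 ∈ T := Finset.mem_filter.mpr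
          ⟨hmem', fun v hv => le_of_le_of_eq (htmax v hv) h'.symm⟩
        have := htLargest (t + 1) this
        omega
    · have : t + 1 = B := by omega
      rw [this, hSB]
      simpa using hMpos
  -- |S (t-1)| ≤ |S t|
  have hprev : |S (t - 1)| ≤ |S t| := by
    by_cases h : t = 1
    · rw [h]; simp [hS0]
    · exact htmax (t - 1) (Finset.mem_Icc.mpr ⟨by omega, by omega⟩)
  -- step identities at t
  have hstep_t : S t - S (t - 1) = (W * g t - G) * ν t := by
    have := hstep (t - 1)
    rwa [show t - 1 + 1 = t from by omega] at this
  have hstep_t1 : S (t + 1) - S t = (W * g (t + 1) - G) * ν (t + 1) := hstep t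
  have hνt : 0 < ν t := hν t (Finset.mem_Icc.mpr ⟨ht1, by omega⟩)
  have hνt1 : 0 < ν (t + 1) := hν (t + 1) (Finset.mem_Icc.mpr ⟨by omega, by omega⟩)
  -- knot property
  have hknot : g t ≠ g (t + 1) := by
    rcases lt_or_gt_of_ne hSt with hneg | hpos
    · -- S t < 0
      have h1 : S t < S (t + 1) := by
        have := neg_abs_le (S (t + 1))
        have habs : |S t| = -S t := abs_of_neg hneg
        nlinarith [hnext]
      have h2 : S t ≤ S (t - 1) := by
        have := neg_abs_le (S (t - 1))
        have habs : |S t| = -S t := abs_of_neg hneg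
        nlinarith [hprev]
      have hg1 : G < W * g (t + 1) := by nlinarith [hstep_t1]
      have hg2 : W * g t ≤ G := by nlinarith [hstep_t]
      intro h
      rw [h] at hg2
      linarith
    · -- S t > 0
      have h1 : S (t + 1) < S t := by
        have := le_abs_self (S (t + 1))
        have habs : |S t| = S t := abs_of_pos hpos
        nlinarith [hnext]
      have h2 : S (t - 1) ≤ S t := by
        have := le_abs_self (S (t - 1))
        have habs : |S t| = S t := abs_of_pos hpos
        nlinarith [hprev]
      have hg1 : W * g (t + 1) < G := by nlinarith [hstep_t1]
      have hg2 : G ≤ W * g t := by nlinarith [hstep_t]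
      intro h
      rw [h] at hg2
      linarith
  -- the integral is S t / sqrt (L * R)
  set L : ℝ := ∑ i ∈ Finset.Icc 1 t, ν i with hLdef
  set R : ℝ := ∑ i ∈ Finset.Icc (t + 1) B, ν i with hRdef
  have hL : 0 < L := by
    apply Finset.sum_pos
    · intro i hi
      obtain ⟨h1, h2⟩ := Finset.mem_Icc.mp hi
      exact hν i (Finset.mem_Icc.mpr ⟨h1, by omega⟩)
    · exact ⟨1, Finset.mem_Icc.mpr ⟨le_refl 1, ht1⟩⟩
  have hR : 0 < R := by
    apply Finset.sum_pos
    · intro i hi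
      obtain ⟨h1, h2⟩ := Finset.mem_Icc.mp hi
      exact hν i (Finset.mem_Icc.mpr ⟨by omega, h2⟩)
    · exact ⟨t + 1, Finset.mem_Icc.mpr ⟨le_refl _, by omega⟩⟩
  have hsqrt : 0 < Real.sqrt (L * R) := Real.sqrt_pos.mpr (mul_pos hL hR)
  have hnum : R * (∑ i ∈ Finset.Icc 1 t, g i * ν i) -
      L * (∑ i ∈ Finset.Icc (t + 1) B, g i * ν i) = S t := by
    have hWsplit : W = L + R := icc_split B t ν (le_of_lt htB)
    have hGsplit : G = (∑ i ∈ Finset.Icc 1 t, g i * ν i) +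
        ∑ i ∈ Finset.Icc (t + 1) B, g i * ν i :=
      icc_split B t (fun i => g i * ν i) (le_of_lt htB)
    simp only [hSdef, hWsplit, hGsplit]
    ring
  have hintegral : ∑ x ∈ Finset.Icc 1 B, decisionStump B t ν x * g x * ν x =
      S t / Real.sqrt (L * R) := by
    rw [stump_sum, ← hLdef, ← hRdef, hnum]
  refine ⟨t, htmem, hknot, ?_⟩
  rw [hintegral]
  exact pow_two_pos_of_ne_zero (div_ne_zero hSt (ne_of_gt hsqrt))
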